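/- Let p ≥ 5 be prime with Legendre symbol (−α/p) = −1 for a positive integer α, and let 1 ≤ j ≤ p−1. Then for all nonnegative integers β and n, Q_{4α}^α(p^{2β+1}(pn+j) + (α+1)(p^{2β+2}−1)/24) ≡ 0 (mod 2). -/

import Mathlib

open Finset Polynomial

lemma even_card_of_involution {β : Type*} [DecidableEq β] (F : Finset β) (f : β → β)
    (h1 : ∀ x ∈ F, f x ∈ F) (h2 : ∀ x ∈ F, f (f x) = x) (h3 : ∀ x ∈ F, f x ≠ x) :
    Even F.card := by
  suffices H : ∀ n (F : Finset β), (∀ x ∈ F, f x ∈ F) → (∀ x ∈ F, f (f x) = x) →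
      (∀ x ∈ F, f x ≠ x) → F.card = n → Even F.card from
    H F.card F h1 h2 h3 rfl
  intro n
  induction n using Nat.strong_induction_on with
  | _ n ih =>
    intro F h1 h2 h3 hn
    rcases F.eq_empty_or_nonempty with rfl | ⟨a, ha⟩
    · simp
    · have hfa : f a ∈ F := h1 a ha
      have hne : f a ≠ a := h3 a ha
      set F' := F \ {a, f a} with hF'
      have hcard : F'.card = F.card - 2 := by
        rw [hF', Finset.card_sdiff_of_subset (by intro x hx; simp at hx; rcases hx with rfl | rfl <;> assumption)]
        simp [Finset.card_pair (Ne.symm hne)]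
      have hsub : ∀ x ∈ F', x ∈ F := by intro x hx; exact (Finset.mem_sdiff.mp hx).1
      have key : ∀ x ∈ F', f x ∈ F' := by
        intro x hx
        rcases Finset.mem_sdiff.mp hx with ⟨hxF, hxn⟩
        simp only [Finset.mem_insert, Finset.mem_singleton] at hxn
        push_neg at hxn
        rw [hF', Finset.mem_sdiff]
        refine ⟨h1 x hxF, ?_⟩
        simp only [Finset.mem_insert, Finset.mem_singleton]
        push_neg
        constructor
        · intro h
          have := h2 x hxF
          rw [h] at this
          exact hxn.2 this.symm
        · intro h
          have := h2 x hxF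
          rw [h, h2 a ha] at this
          exact hxn.1 this.symm
      have hcard2 : 2 ≤ F.card := by
        have : {a, f a} ⊆ F := by
          intro x hx; simp at hx; rcases hx with rfl | rfl <;> assumption
        calc 2 = ({a, f a} : Finset β).card := (Finset.card_pair (Ne.symm hne)).symm
        _ ≤ F.card := Finset.card_le_card this
      have := ih (F.card - 2) (by omega) F' key
        (fun x hx => h2 x (hsub x hx)) (fun x hx => h3 x (hsub x hx)) hcard
      rw [hcard] at this
      have : Even (F.card - 2 + 2) := by exact this.add (by norm_num)
      rwa [Nat.sub_add_cancel hcard2] at this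

namespace Frank

noncomputable def bb (T : Finset ℕ) (hT : T.Nonempty) : ℕ :=
  Nat.find (⟨T.max' hT + 1, by simp⟩ : ∃ x, Finset.Icc x (T.max' hT) ⊆ T)

variable (T : Finset ℕ) (hT : T.Nonempty)

noncomputable def sg : ℕ := T.max' hT + 1 - bb T hT

def excep (T : Finset ℕ) : Prop := ∃ hT : T.Nonempty, T.min' hT = bb T hT ∧
    (T.max' hT + 1 = 2 * bb T hT ∨ T.max' hT + 2 = 2 * bb T hT)

noncomputable def moveA : Finset ℕ :=
  ((T \ Finset.Icc (T.max' hT + 1 - T.min' hT) (T.max' hT)).erase (T.min' hT)) ∪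
    Finset.Icc (T.max' hT + 2 - T.min' hT) (T.max' hT + 1)

noncomputable def moveB : Finset ℕ :=
  (T \ Finset.Icc (bb T hT) (T.max' hT)) ∪
    Finset.Icc (bb T hT - 1) (T.max' hT - 1) ∪ {sg T hT}

noncomputable def f (T : Finset ℕ) : Finset ℕ :=
  if hT : T.Nonempty then
    (if T.min' hT ≤ sg T hT then moveA T hT else moveB T hT) else ∅

section lemmas

lemma bb_subset : Finset.Icc (bb T hT) (T.max' hT) ⊆ T := by
  have := Nat.find_spec (⟨T.max' hT + 1, by simp⟩ : ∃ x, Finset.Icc x (T.max' hT) ⊆ T)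
  exact this

lemma bb_le_max : bb T hT ≤ T.max' hT := by
  apply Nat.find_le
  intro x hx
  simp only [Finset.mem_Icc] at hx
  have : x = T.max' hT := le_antisymm hx.2 hx.1
  rw [this]; exact T.max'_mem hT

lemma bb_pos (h0 : 0 ∉ T) : 1 ≤ bb T hT := by
  by_contra h
  push_neg at h
  interval_cases h' : bb T hT
  · exact h0 (bb_subset T hT (by simp [h']))

lemma bb_eq (c : ℕ) (hc : 1 ≤ c) (hsub : Finset.Icc c (T.max' hT) ⊆ T)
    (hnot : c - 1 ∉ T) (hcm : c ≤ T.max' hT + 1) : bb T hT = c := by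
  have h1 : bb T hT ≤ c := Nat.find_le hsub
  rcases Nat.eq_or_lt_of_le h1 with heq | hlt
  · exact heq
  · exfalso
    apply hnot
    exact bb_subset T hT (by simp [Finset.mem_Icc]; omega)

lemma bb_pred_not_mem (h0 : 0 ∉ T) : bb T hT - 1 ∉ T := by
  intro hmem
  have h1 : 1 ≤ bb T hT := bb_pos T hT h0
  have := Nat.find_min (⟨T.max' hT + 1, by simp⟩ : ∃ x, Finset.Icc x (T.max' hT) ⊆ T)
    (show bb T hT - 1 < bb T hT by omega)
  apply this
  intro x hx
  simp only [Finset.mem_Icc] at hx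
  rcases Nat.eq_or_lt_of_le hx.1 with heq | hlt
  · rw [← heq]; exact hmem
  · exact bb_subset T hT (by simp [Finset.mem_Icc]; omega)

lemma min_pos (h0 : 0 ∉ T) : 1 ≤ T.min' hT := by
  have := T.min'_mem hT
  rcases Nat.eq_zero_or_pos (T.min' hT) with h | h
  · rw [h] at this; exact absurd this h0
  · exact h

lemma sum_Icc_succ_shift (a c : ℕ) (h : a ≤ c) :
    ∑ i ∈ Finset.Icc (a+1) (c+1), i = (∑ i ∈ Finset.Icc a c, i) + (c + 1 - a) := by
  have himg : Finset.Icc (a+1) (c+1) = Finset.image (· + 1) (Finset.Icc a c) := by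
    ext x
    simp only [Finset.mem_image, Finset.mem_Icc]
    constructor
    · intro hx; exact ⟨x - 1, by omega, by omega⟩
    · rintro ⟨y, hy, rfl⟩; omega
  rw [himg, Finset.sum_image (fun x _ y _ h => by simpa using h), Finset.sum_add_distrib]
  simp [Nat.card_Icc, h]


lemma min_eq_bb_iff (h0 : 0 ∉ T) :
    T.min' hT = bb T hT ↔ T = Finset.Icc (bb T hT) (T.max' hT) := by
  constructor
  · intro h
    apply Finset.Subset.antisymm
    · intro x hx
      simp only [Finset.mem_Icc]
      exact ⟨h ▸ T.min'_le x hx, T.le_max' x hx⟩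
    · exact bb_subset T hT
  · intro h
    have hb : bb T hT ∈ T := bb_subset T hT (by simp [Finset.mem_Icc, bb_le_max T hT])
    refine le_antisymm (T.min'_le _ hb) ?_
    apply Finset.le_min'
    intro y hy
    rw [h] at hy
    exact (Finset.mem_Icc.mp hy).1

lemma caseA (h0 : 0 ∉ T) (hne : ¬ excep T) (hA : T.min' hT ≤ sg T hT) :
    (moveA T hT).Nonempty ∧ (0 ∉ moveA T hT) ∧ (∑ i ∈ moveA T hT, i = ∑ i ∈ T, i)
    ∧ (¬ excep (moveA T hT)) ∧ f (moveA T hT) = T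
    ∧ (∀ x ∈ moveA T hT, T.min' hT < x) := by
  set m := T.max' hT with hm
  set s := T.min' hT with hs
  set b := bb T hT with hb
  have hbm : b ≤ m := bb_le_max T hT
  have hb1 : 1 ≤ b := bb_pos T hT h0
  have hsm : s ≤ m := T.min'_le _ (T.max'_mem hT)
  have hsT : s ∈ T := T.min'_mem hT
  have hs1 : 1 ≤ s := min_pos T hT h0
  have hbs : b ≤ m + 1 - s := by
    have : s ≤ m + 1 - b := hA
    omega
  have hIsub : Finset.Icc (m + 1 - s) m ⊆ T := by
    intro x hx
    apply bb_subset T hT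
    simp only [Finset.mem_Icc] at hx ⊢
    omega
  -- key: 2s ≤ m
  have m2s : 2 * s ≤ m := by
    by_contra hcon
    push_neg at hcon
    have hTIcc : T = Finset.Icc s m := by
      apply Finset.Subset.antisymm
      · intro x hx
        simp only [Finset.mem_Icc]
        exact ⟨T.min'_le x hx, T.le_max' x hx⟩
      · intro x hx
        apply hIsub
        simp only [Finset.mem_Icc] at hx ⊢
        omega
    have hbeq : b = s := by
      apply bb_eq T hT s hs1
      · rw [← hm, hTIcc]
      · rw [hTIcc]; simp [Finset.mem_Icc]; omega
      · omega
    apply hne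
    refine ⟨hT, by rw [← hs, ← hb, hbeq], ?_⟩
    left
    have : s ≤ m + 1 - b := hA
    omega
  -- components
  set I := Finset.Icc (m + 1 - s) m with hI
  set I' := Finset.Icc (m + 2 - s) (m + 1) with hI'
  set R := (T \ I).erase s with hR
  have hmemR : ∀ x, x ∈ R ↔ (x ∈ T ∧ s < x ∧ x ≤ m - s) := by
    intro x
    rw [hR]
    simp only [Finset.mem_erase, Finset.mem_sdiff, hI, Finset.mem_Icc]
    constructor
    · rintro ⟨hxs, hxT, hxI⟩
      have := T.le_max' x hxT
      have := T.min'_le x hxT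
      refine ⟨hxT, by omega, by omega⟩
    · rintro ⟨hxT, hxgt, hxle⟩
      refine ⟨by omega, hxT, by omega⟩
  have hdecomp : ∀ x, x ∈ T ↔ (x ∈ R ∨ x = s ∨ x ∈ I) := by
    intro x
    rw [hmemR]
    simp only [hI, Finset.mem_Icc]
    constructor
    · intro hxT
      have := T.le_max' x hxT
      have := T.min'_le x hxT
      by_cases hc : m + 1 - s ≤ x
      · right; right; omega
      · by_cases hc2 : x = s
        · right; left; exact hc2
        · left
          have := T.min'_le x hxT
          exact ⟨hxT, by omega, by omega⟩
    · rintro (⟨h1, _, _⟩ | rfl | hx)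
      · exact h1
      · exact hsT
      · exact hIsub (by simp [hI, Finset.mem_Icc]; omega)
  have hmemA : ∀ x, x ∈ moveA T hT ↔ (x ∈ R ∨ x ∈ I') := by
    intro x; rw [moveA, Finset.mem_union]
  -- sums
  have hsumI' : ∑ i ∈ I', i = (∑ i ∈ I, i) + s := by
    rw [hI, hI']
    have e1 : m + 2 - s = (m + 1 - s) + 1 := by omega
    rw [e1, sum_Icc_succ_shift (m + 1 - s) m (by omega)]
    congr 1
    omega
  have hdRs : Disjoint R ({s} : Finset ℕ) := by
    rw [Finset.disjoint_singleton_right, hmemR]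
    rintro ⟨_, h2, _⟩; omega
  have hdRI : Disjoint R I := by
    rw [Finset.disjoint_left]
    intro x hx hxI
    rw [hmemR] at hx
    simp only [hI, Finset.mem_Icc] at hxI
    omega
  have hdsI : Disjoint ({s} : Finset ℕ) I := by
    rw [Finset.disjoint_singleton_left]
    simp only [hI, Finset.mem_Icc]
    omega
  have hdRI' : Disjoint R I' := by
    rw [Finset.disjoint_left]
    intro x hx hxI'
    rw [hmemR] at hx
    simp only [hI', Finset.mem_Icc] at hxI'
    omega
  have hTsplit : ∑ i ∈ T, i = (∑ i ∈ R, i) + s + ∑ i ∈ I, i := by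
    have h1 : T = (R ∪ {s}) ∪ I := by
      ext x; rw [hdecomp]; simp [or_assoc]; tauto
    rw [h1, Finset.sum_union (Finset.disjoint_union_left.mpr ⟨hdRI, hdsI⟩),
      Finset.sum_union hdRs]
    simp
  have hsumA : ∑ i ∈ moveA T hT, i = (∑ i ∈ R, i) + ∑ i ∈ I', i := by
    have h1 : moveA T hT = R ∪ I' := by ext x; rw [hmemA]; simp
    rw [h1, Finset.sum_union hdRI']
  have hsum : ∑ i ∈ moveA T hT, i = ∑ i ∈ T, i := by
    rw [hsumA, hsumI', hTsplit]; ring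
  -- basic facts about moveA
  have hmem1 : m + 1 ∈ moveA T hT := by
    rw [hmemA]; right; simp [hI', Finset.mem_Icc]; omega
  have hT' : (moveA T hT).Nonempty := ⟨m + 1, hmem1⟩
  have h0' : 0 ∉ moveA T hT := by
    rw [hmemA]
    rintro (h | h)
    · rw [hmemR] at h; exact h0 h.1
    · simp [hI', Finset.mem_Icc] at h; omega
  have hgt : ∀ x ∈ moveA T hT, s < x := by
    intro x hx
    rw [hmemA] at hx
    rcases hx with h | h
    · rw [hR] at h
      rcases Finset.mem_erase.mp h with ⟨hxs, hxm⟩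
      have := T.min'_le x (Finset.mem_sdiff.mp hxm).1
      omega
    · simp [hI', Finset.mem_Icc] at h; omega
  have hle : ∀ x ∈ moveA T hT, x ≤ m + 1 := by
    intro x hx
    rw [hmemA] at hx
    rcases hx with h | h
    · rw [hmemR] at h; have := T.le_max' x h.1; omega
    · simp [hI', Finset.mem_Icc] at h; omega
  have hmax' : (moveA T hT).max' hT' = m + 1 :=
    le_antisymm (Finset.max'_le _ _ _ hle) (Finset.le_max' _ _ hmem1)
  have hbb' : bb (moveA T hT) hT' = m + 2 - s := by
    apply bb_eq _ hT' _ (by omega)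
    · rw [hmax']
      intro x hx
      rw [hmemA]; right; exact hx
    · intro hmem
      rw [hmemA] at hmem
      rcases hmem with h | h
      · rw [hmemR] at h; omega
      · simp [hI', Finset.mem_Icc] at h; omega
    · rw [hmax']; omega
  have hsg' : sg (moveA T hT) hT' = s := by
    rw [sg, hmax', hbb']; omega
  have hmin' : ¬ ((moveA T hT).min' hT' ≤ sg (moveA T hT) hT') := by
    rw [hsg']
    have := hgt _ ((moveA T hT).min'_mem hT')
    omega
  have hexcep' : ¬ excep (moveA T hT) := by
    rintro ⟨h1, h2, h3⟩
    rw [hmax', hbb'] at h3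
    omega
  refine ⟨hT', h0', hsum, hexcep', ?_, hgt⟩
  -- f (moveA T hT) = moveB (moveA T hT) hT' = T
  rw [f, dif_pos hT', if_neg hmin']
  rw [moveB]
  rw [hmax', hbb', hsg']
  have e2 : m + 2 - s - 1 = m + 1 - s := by omega
  have e3 : m + 1 - 1 = m := by omega
  rw [e2, e3]
  ext x
  simp only [Finset.mem_union, Finset.mem_sdiff, Finset.mem_singleton]
  rw [hmemA, hdecomp, ← hI, ← hI']
  have hx1 : x ∈ R → x ∉ I' := fun hx => Finset.disjoint_left.mp hdRI' hx
  tauto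


set_option maxHeartbeats 1000000 in
lemma caseB (h0 : 0 ∉ T) (hne : ¬ excep T) (hB : ¬ (T.min' hT ≤ sg T hT)) :
    (moveB T hT).Nonempty ∧ (0 ∉ moveB T hT) ∧ (∑ i ∈ moveB T hT, i = ∑ i ∈ T, i)
    ∧ (¬ excep (moveB T hT)) ∧ f (moveB T hT) = T
    ∧ (sg T hT ∈ moveB T hT ∧ sg T hT < T.min' hT) := by
  set m := T.max' hT with hm
  set s := T.min' hT with hs
  set b := bb T hT with hb
  set σ := sg T hT with hσ
  have hσdef : σ = m + 1 - b := by rw [hσ, sg]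
  have hbm : b ≤ m := bb_le_max T hT
  have hb1 : 1 ≤ b := bb_pos T hT h0
  have hsm : s ≤ m := T.min'_le _ (T.max'_mem hT)
  have hsT : s ∈ T := T.min'_mem hT
  have hs1 : 1 ≤ s := min_pos T hT h0
  have hsσ : σ < s := by omega
  have hb2 : 2 ≤ b := by
    by_contra hcon
    have : b = 1 := by omega
    rw [this] at hσdef
    omega
  have hσ1 : 1 ≤ σ := by omega
  have hbpnm : b - 1 ∉ T := bb_pred_not_mem T hT h0
  -- key : σ + 2 ≤ b
  have hkey : σ + 2 ≤ b := by
    by_cases hL : ∃ x ∈ T, x < b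
    · obtain ⟨x, hxT, hxb⟩ := hL
      have h1 : s ≤ x := T.min'_le x hxT
      have h2 : s ≠ b - 1 := fun h => hbpnm (h ▸ hsT)
      omega
    · push_neg at hL
      have hTIcc : T = Finset.Icc b m := by
        apply Finset.Subset.antisymm
        · intro x hx
          simp only [Finset.mem_Icc]
          exact ⟨hL x hx, T.le_max' x hx⟩
        · exact bb_subset T hT
      have hsb : s = b := by
        apply le_antisymm (T.min'_le b (bb_subset T hT (by simp [Finset.mem_Icc]; omega)))
        exact hL s hsT
      have hno : ¬ (m + 1 = 2 * b ∨ m + 2 = 2 * b) := fun hor => hne ⟨hT, hsb, hor⟩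
      push_neg at hno
      omega
  -- components
  set L := T \ Finset.Icc b m with hL
  set I₂ := Finset.Icc (b - 1) (m - 1) with hI₂
  have hmemL : ∀ x, x ∈ L ↔ (x ∈ T ∧ x ≤ b - 2) := by
    intro x
    rw [hL]
    simp only [Finset.mem_sdiff, Finset.mem_Icc]
    constructor
    · rintro ⟨hxT, hxI⟩
      have := T.le_max' x hxT
      have h2 : x ≠ b - 1 := fun h => hbpnm (h ▸ hxT)
      exact ⟨hxT, by omega⟩
    · rintro ⟨hxT, hxle⟩
      exact ⟨hxT, by omega⟩
  have hLs : ∀ x ∈ L, s ≤ x := by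
    intro x hx
    rw [hmemL] at hx
    exact T.min'_le x hx.1
  have hdecomp : ∀ x, x ∈ T ↔ (x ∈ L ∨ x ∈ Finset.Icc b m) := by
    intro x
    rw [hmemL]
    simp only [Finset.mem_Icc]
    constructor
    · intro hxT
      have := T.le_max' x hxT
      have h2 : x ≠ b - 1 := fun h => hbpnm (h ▸ hxT)
      by_cases hc : b ≤ x
      · right; omega
      · left; exact ⟨hxT, by omega⟩
    · rintro (⟨h1, _⟩ | hx)
      · exact h1
      · exact bb_subset T hT (by simp [Finset.mem_Icc]; omega)
  have hmemB : ∀ x, x ∈ moveB T hT ↔ (x ∈ L ∨ x ∈ I₂ ∨ x = σ) := by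
    intro x
    rw [moveB, Finset.mem_union, Finset.mem_union, Finset.mem_singleton]
    rw [← hm, ← hb, ← hσ, ← hL, ← hI₂, or_assoc]
  -- sums
  have hsumIcc : ∑ i ∈ Finset.Icc b m, i = (∑ i ∈ I₂, i) + σ := by
    have e1 : b = (b - 1) + 1 := by omega
    have e2 : m = (m - 1) + 1 := by omega
    rw [hI₂]
    conv_lhs => rw [e1, e2]
    rw [sum_Icc_succ_shift (b-1) (m-1) (by omega)]
    congr 1
    omega
  have hdLI : Disjoint L I₂ := by
    rw [Finset.disjoint_left]
    intro x hx hxI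
    rw [hmemL] at hx
    simp only [hI₂, Finset.mem_Icc] at hxI
    omega
  have hdLs : σ ∉ L := by
    intro hx
    have := hLs σ hx
    omega
  have hdIs : σ ∉ I₂ := by
    simp only [hI₂, Finset.mem_Icc]
    omega
  have hdLIccbm : Disjoint L (Finset.Icc b m) := by
    rw [Finset.disjoint_left]
    intro x hx hxI
    rw [hmemL] at hx
    simp only [Finset.mem_Icc] at hxI
    omega
  have hTsplit : ∑ i ∈ T, i = (∑ i ∈ L, i) + ∑ i ∈ Finset.Icc b m, i := by
    have h1 : T = L ∪ Finset.Icc b m := by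
      ext x; rw [hdecomp, Finset.mem_union]
    conv_lhs => rw [h1]
    rw [Finset.sum_union hdLIccbm]
  have hsplitB : moveB T hT = (L ∪ I₂) ∪ {σ} := by
    ext x; rw [hmemB]; simp [or_assoc]; tauto
  have hsum : ∑ i ∈ moveB T hT, i = ∑ i ∈ T, i := by
    rw [hsplitB, Finset.sum_union, Finset.sum_union hdLI]
    · simp only [Finset.sum_singleton]
      rw [hTsplit, hsumIcc]
      ring
    · rw [Finset.disjoint_singleton_right, Finset.mem_union]
      rintro (h | h)
      · exact hdLs h
      · exact hdIs h
  -- basic facts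
  have hmem1 : m - 1 ∈ moveB T hT := by
    rw [hmemB]; right; left; simp [hI₂, Finset.mem_Icc]; omega
  have hT' : (moveB T hT).Nonempty := ⟨m - 1, hmem1⟩
  have hmemσ : σ ∈ moveB T hT := by rw [hmemB]; right; right; rfl
  have h0' : 0 ∉ moveB T hT := by
    rw [hmemB]
    rintro (h | h | h)
    · exact h0 ((hmemL 0).mp h).1
    · simp [hI₂, Finset.mem_Icc] at h; omega
    · omega
  have hge : ∀ x ∈ moveB T hT, σ ≤ x := by
    intro x hx
    rw [hmemB] at hx
    rcases hx with h | h | h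
    · have := hLs x h; omega
    · simp only [hI₂, Finset.mem_Icc] at h; omega
    · omega
  have hle : ∀ x ∈ moveB T hT, x ≤ m - 1 := by
    intro x hx
    rw [hmemB] at hx
    rcases hx with h | h | h
    · rw [hmemL] at h; omega
    · simp only [hI₂, Finset.mem_Icc] at h; omega
    · omega
  have hmax' : (moveB T hT).max' hT' = m - 1 :=
    le_antisymm (Finset.max'_le _ _ _ hle) (Finset.le_max' _ _ hmem1)
  have hmin' : (moveB T hT).min' hT' = σ :=
    le_antisymm (Finset.min'_le _ _ hmemσ) (Finset.le_min' _ _ _ hge)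
  have hbb'le : bb (moveB T hT) hT' ≤ b - 1 := by
    apply Nat.find_le
    rw [hmax']
    intro x hx
    rw [hmemB]; right; left; exact hx
  have hsg' : sg (moveB T hT) hT' = m - bb (moveB T hT) hT' := by
    rw [sg, hmax']
    have hbb'pos : 1 ≤ bb (moveB T hT) hT' := bb_pos _ hT' h0'
    omega
  have hAcase : (moveB T hT).min' hT' ≤ sg (moveB T hT) hT' := by
    rw [hmin', hsg']
    omega
  have hexcep' : ¬ excep (moveB T hT) := by
    rintro ⟨h1, h2, h3⟩
    rw [hmin'] at h2
    rw [hmax', ← h2] at h3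
    omega
  refine ⟨hT', h0', hsum, hexcep', ?_, hmemσ, hsσ⟩
  rw [f, dif_pos hT', if_pos hAcase]
  rw [moveA, hmax', hmin']
  have e4 : m - 1 + 1 - σ = b - 1 := by omega
  have e5 : m - 1 + 2 - σ = b := by omega
  have e6 : m - 1 + 1 = m := by omega
  rw [e4, e5, e6, ← hI₂]
  ext x
  simp only [Finset.mem_union, Finset.mem_erase, Finset.mem_sdiff]
  rw [hmemB, hdecomp]
  have hx1 : x ∈ L → x ∉ I₂ := fun hx => Finset.disjoint_left.mp hdLI hx
  have hx2 : x ∈ L → x ≠ σ := fun hx h => hdLs (h ▸ hx)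
  tauto

lemma sum_Icc_gauss (a c : ℕ) : (∑ i ∈ Finset.Icc a c, i) * 2 = (a + c) * (c + 1 - a) := by
  rcases le_or_gt a c with hle | hlt
  · obtain ⟨d, rfl⟩ : ∃ d, c = a + d := ⟨c - a, by omega⟩
    have e1 : a + d + 1 - a = d + 1 := by omega
    rw [e1]
    have himg : Finset.Icc a (a + d) = Finset.image (· + a) (Finset.range (d+1)) := by
      ext x
      simp only [Finset.mem_image, Finset.mem_Icc, Finset.mem_range]
      constructor
      · intro hx; exact ⟨x - a, by omega, by omega⟩
      · rintro ⟨y, hy, rfl⟩; omega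
    rw [himg, Finset.sum_image (fun x _ y _ h => by simpa using h), Finset.sum_add_distrib,
      Finset.sum_const, Finset.card_range, smul_eq_mul]
    have h2 := Finset.sum_range_id_mul_two (d+1)
    have e2 : d + 1 - 1 = d := by omega
    rw [e2] at h2
    calc (∑ x ∈ Finset.range (d+1), x + (d+1) * a) * 2
        = (∑ x ∈ Finset.range (d+1), x) * 2 + (d+1)*a*2 := by ring
      _ = (d+1)*d + (d+1)*a*2 := by rw [h2]
      _ = (a + (a+d)) * (d+1) := by ring
  · rw [Finset.Icc_eq_empty (by omega)]
    simp
    omega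

lemma excep_square (T : Finset ℕ) (hex : excep T) (h0 : 0 ∉ T) :
    ∃ x, x * x = 24 * (∑ i ∈ T, i) + 1 := by
  obtain ⟨hT, hmin, hor⟩ := hex
  have hTIcc := (min_eq_bb_iff T hT h0).mp hmin
  have hb1 : 1 ≤ bb T hT := bb_pos T hT h0
  have hbm : bb T hT ≤ T.max' hT := bb_le_max T hT
  have hsum2 : (∑ i ∈ T, i) * 2 = (bb T hT + T.max' hT) * (T.max' hT + 1 - bb T hT) := by
    conv_lhs => rw [hTIcc]
    exact sum_Icc_gauss _ _
  obtain ⟨c, hc⟩ : ∃ c, bb T hT = c + 1 := ⟨bb T hT - 1, by omega⟩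
  rcases hor with h1 | h1
  · refine ⟨6*c+5, ?_⟩
    have e1 : T.max' hT + 1 - bb T hT = c + 1 := by omega
    have e2 : bb T hT + T.max' hT = 3*c + 2 := by omega
    rw [e1, e2] at hsum2
    have h2 : 2*((6*c+5)*(6*c+5)) = 2*(24*(∑ i ∈ T, i)+1) := by
      calc 2*((6*c+5)*(6*c+5)) = 24*((3*c+2)*(c+1)) + 2 := by ring
      _ = 24*((∑ i ∈ T, i)*2) + 2 := by rw [hsum2]
      _ = 2*(24*(∑ i ∈ T, i)+1) := by ring
    exact Nat.eq_of_mul_eq_mul_left (by norm_num) h2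
  · refine ⟨6*c+1, ?_⟩
    have e1 : T.max' hT + 1 - bb T hT = c := by omega
    have e2 : bb T hT + T.max' hT = 3*c + 1 := by omega
    rw [e1, e2] at hsum2
    have h2 : 2*((6*c+1)*(6*c+1)) = 2*(24*(∑ i ∈ T, i)+1) := by
      calc 2*((6*c+1)*(6*c+1)) = 24*((3*c+1)*c) + 2 := by ring
      _ = 24*((∑ i ∈ T, i)*2) + 2 := by rw [hsum2]
      _ = 2*(24*(∑ i ∈ T, i)+1) := by ring
    exact Nat.eq_of_mul_eq_mul_left (by norm_num) h2

end lemmas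

theorem franklin (n : ℕ) (h : ¬ ∃ x : ℕ, x * x = 24 * n + 1) :
    Even (((Finset.Icc 1 n).powerset.filter (fun S => ∑ i ∈ S, i = n)).card) := by
  classical
  set P := (Finset.Icc 1 n).powerset.filter (fun S => ∑ i ∈ S, i = n) with hP
  have mem_P : ∀ T, T ∈ P ↔ ((∀ x ∈ T, 0 < x) ∧ ∑ i ∈ T, i = n) := by
    intro T
    rw [hP, Finset.mem_filter, Finset.mem_powerset]
    constructor
    · rintro ⟨h1, h2⟩
      exact ⟨fun x hx => (Finset.mem_Icc.mp (h1 hx)).1, h2⟩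
    · rintro ⟨h1, h2⟩
      refine ⟨fun x hx => ?_, h2⟩
      simp only [Finset.mem_Icc]
      refine ⟨h1 x hx, ?_⟩
      calc x = ∑ i ∈ {x}, i := by simp
      _ ≤ ∑ i ∈ T, i := Finset.sum_le_sum_of_subset (by simpa using hx)
      _ = n := h2
  have hn : 1 ≤ n := by
    rcases Nat.eq_zero_or_pos n with rfl | h1
    · exact absurd ⟨1, by norm_num⟩ h
    · exact h1
  have main : ∀ T ∈ P, (f T ∈ P ∧ f (f T) = T ∧ f T ≠ T) := by
    intro T hTP
    obtain ⟨hpos, hsum⟩ := (mem_P T).mp hTP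
    have hT : T.Nonempty := by
      rcases T.eq_empty_or_nonempty with rfl | h1
      · simp at hsum; omega
      · exact h1
    have h0 : 0 ∉ T := fun hmem => by have := hpos 0 hmem; omega
    have hnex : ¬ excep T := by
      intro hex
      apply h
      obtain ⟨x, hx⟩ := excep_square T hex h0
      exact ⟨x, by rw [hx, hsum]⟩
    by_cases hA : T.min' hT ≤ sg T hT
    · have hf : f T = moveA T hT := by rw [f, dif_pos hT, if_pos hA]
      obtain ⟨h1, h2, h3, h4, h5, h6⟩ := caseA T hT h0 hnex hA
      refine ⟨?_, ?_, ?_⟩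
      · rw [hf, mem_P]
        exact ⟨fun x hx => Nat.pos_of_ne_zero (fun hz => h2 (hz ▸ hx)), by rw [h3, hsum]⟩
      · rw [hf]; exact h5
      · rw [hf]
        intro heq
        have := h6 (T.min' hT) (by rw [heq]; exact T.min'_mem hT)
        omega
    · have hf : f T = moveB T hT := by rw [f, dif_pos hT, if_neg hA]
      obtain ⟨h1, h2, h3, h4, h5, h6⟩ := caseB T hT h0 hnex hA
      refine ⟨?_, ?_, ?_⟩
      · rw [hf, mem_P]
        exact ⟨fun x hx => Nat.pos_of_ne_zero (fun hz => h2 (hz ▸ hx)), by rw [h3, hsum]⟩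
      · rw [hf]; exact h5
      · rw [hf]
        intro heq
        have hm1 := h6.1
        rw [heq] at hm1
        have := T.min'_le _ hm1
        have := h6.2
        omega
  exact even_card_of_involution P f (fun T hT => (main T hT).1) (fun T hT => (main T hT).2.1)
    (fun T hT => (main T hT).2.2)

end Frank



noncomputable def qpoly (K : Finset ℕ) : Polynomial (ZMod 2) := ∏ k ∈ K, (X ^ k + 1)

lemma qpoly_eq_sum (K : Finset ℕ) : qpoly K = ∑ S ∈ K.powerset, X ^ (∑ i ∈ S, i) := by
  rw [qpoly, Finset.prod_add]
  apply Finset.sum_congr rfl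
  intro S hS
  rw [Finset.prod_pow_eq_pow_sum]
  simp

lemma coeff_qpoly (K : Finset ℕ) (n : ℕ) : (qpoly K).coeff n =
    (((K.powerset.filter (fun S => ∑ i ∈ S, i = n)).card : ℕ) : ZMod 2) := by
  rw [qpoly_eq_sum, Polynomial.finset_sum_coeff]
  simp only [Polynomial.coeff_X_pow]
  rw [← Finset.sum_boole]
  apply Finset.sum_congr rfl
  intro S hS
  simp [eq_comm]

lemma filter_powerset_stable (p : ℕ → Prop) [DecidablePred p] (M n : ℕ) (h : n ≤ M) :
    ((Finset.Icc 1 M).filter p).powerset.filter (fun S => ∑ i ∈ S, i = n)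
      = ((Finset.Icc 1 n).filter p).powerset.filter (fun S => ∑ i ∈ S, i = n) := by
  ext S
  simp only [Finset.mem_filter, Finset.mem_powerset, Finset.subset_iff, Finset.mem_Icc]
  constructor
  · rintro ⟨h1, h2⟩
    refine ⟨fun {x} hx => ?_, h2⟩
    obtain ⟨⟨hx1, _⟩, hx2⟩ := h1 hx
    have : x ≤ ∑ i ∈ S, i := Finset.single_le_sum (fun i _ => Nat.zero_le i) hx
    exact ⟨⟨hx1, by omega⟩, hx2⟩
  · rintro ⟨h1, h2⟩
    refine ⟨fun {x} hx => ?_, h2⟩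
    obtain ⟨⟨hx1, hx3⟩, hx2⟩ := h1 hx
    exact ⟨⟨hx1, by omega⟩, hx2⟩

lemma coeff_qpoly_high (E : Finset ℕ) (l : ℕ) (hE : ∀ k ∈ E, l < k) (i : ℕ) (hi : i ≤ l) :
    (qpoly E).coeff i = if i = 0 then 1 else 0 := by
  rw [coeff_qpoly]
  split_ifs with h
  · subst h
    have : E.powerset.filter (fun S => ∑ i ∈ S, i = 0) = {∅} := by
      ext S
      simp only [Finset.mem_filter, Finset.mem_powerset, Finset.mem_singleton]
      constructor
      · rintro ⟨h1, h2⟩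
        rcases S.eq_empty_or_nonempty with rfl | ⟨a, ha⟩
        · rfl
        · exfalso
          have h3 : a ≤ ∑ i ∈ S, i := Finset.single_le_sum (fun i _ => Nat.zero_le i) ha
          have h4 := hE a (h1 ha)
          omega
      · rintro rfl
        simp
    rw [this]
    simp
  · have : E.powerset.filter (fun S => ∑ i ∈ S, i = i) = ∅ := by
      apply Finset.filter_eq_empty_iff.mpr
      intro S hS hsum
      rcases S.eq_empty_or_nonempty with rfl | ⟨a, ha⟩
      · simp at hsum; exact h hsum.symm
      · have h3 : a ≤ ∑ i ∈ S, i := Finset.single_le_sum (fun i _ => Nat.zero_le i) ha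
        have h4 := hE a (Finset.mem_powerset.mp hS ha)
        omega
    rw [this]
    simp

lemma coeff_mul_qpoly_high (g : Polynomial (ZMod 2)) (E : Finset ℕ) (l : ℕ)
    (hE : ∀ k ∈ E, l < k) (i : ℕ) (hi : i ≤ l) : (g * qpoly E).coeff i = g.coeff i := by
  rw [Polynomial.coeff_mul]
  rw [Finset.sum_eq_single (i, 0)]
  · rw [coeff_qpoly_high E l hE 0 (Nat.zero_le _)]
    simp
  · rintro ⟨a, b⟩ hab hne
    rw [Finset.HasAntidiagonal.mem_antidiagonal] at hab
    have hb : b ≠ 0 := by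
      rintro rfl
      exact hne (by simp at hab ⊢; omega)
    rw [coeff_qpoly_high E l hE b (by omega), if_neg hb]
    ring
  · intro hmem
    exfalso
    exact hmem (by simp)


lemma sq_eq_expand (f : Polynomial (ZMod 2)) : f ^ 2 = Polynomial.expand _ 2 f := by
  have hfr : frobenius (ZMod 2) 2 = RingHom.id (ZMod 2) := by
    apply RingHom.ext
    have h : ∀ x : ZMod 2, x ^ 2 = x := by decide
    intro x
    rw [frobenius_def, RingHom.id_apply, h]
  have h2 := Polynomial.map_frobenius_expand (p := 2) f
  rw [hfr, Polynomial.map_id] at h2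
  rw [h2]

noncomputable def dpoly (M : ℕ) : Polynomial (ZMod 2) := qpoly (Finset.Icc 1 M)
noncomputable def odpoly (M : ℕ) : Polynomial (ZMod 2) :=
  qpoly ((Finset.Icc 1 M).filter (fun k => ¬ 2 ∣ k))

lemma qpoly_union (A B : Finset ℕ) (h : Disjoint A B) :
    qpoly (A ∪ B) = qpoly A * qpoly B := Finset.prod_union h

lemma qpoly_image_mul (c : ℕ) (hc : 0 < c) (K : Finset ℕ) :
    qpoly (K.image (fun k => c * k)) = Polynomial.expand _ c (qpoly K) := by
  rw [qpoly, qpoly, Finset.prod_image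
    (fun a _ b _ h => Nat.eq_of_mul_eq_mul_left hc h)]
  rw [map_prod]
  apply Finset.prod_congr rfl
  intro k hk
  rw [map_add, map_one, map_pow, Polynomial.expand_X, ← pow_mul]

lemma dpoly_factor (M : ℕ) : dpoly M = odpoly M * Polynomial.expand _ 2 (dpoly (M / 2)) := by
  have himg : (Finset.Icc 1 M).filter (fun k => ¬¬ 2 ∣ k)
      = (Finset.Icc 1 (M/2)).image (fun k => 2 * k) := by
    ext x
    simp only [Finset.mem_filter, Finset.mem_image, Finset.mem_Icc, not_not]
    constructor
    · rintro ⟨⟨h1, h2⟩, h3⟩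
      exact ⟨x / 2, by omega, by omega⟩
    · rintro ⟨y, hy, rfl⟩
      refine ⟨⟨by omega, by omega⟩, by omega⟩
  have key := Finset.prod_filter_mul_prod_filter_not (Finset.Icc 1 M) (fun k => ¬ 2 ∣ k)
    (fun k => (X : Polynomial (ZMod 2)) ^ k + 1)
  rw [dpoly, odpoly, qpoly, ← key]
  congr 1
  rw [show (∏ k ∈ (Finset.Icc 1 M).filter (fun k => ¬¬ 2 ∣ k),
      ((X : Polynomial (ZMod 2)) ^ k + 1)) = qpoly ((Finset.Icc 1 M).filter (fun k => ¬¬ 2 ∣ k))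
      from rfl]
  rw [himg, qpoly_image_mul 2 (by norm_num)]
  rfl

lemma eval_zero_qpoly (S : Finset ℕ) (hS : ∀ k ∈ S, k ≠ 0) :
    Polynomial.eval 0 (qpoly S) = 1 := by
  rw [qpoly, Polynomial.eval_prod]
  apply Finset.prod_eq_one
  intro k hk
  rw [Polynomial.eval_add, Polynomial.eval_pow, Polynomial.eval_X, Polynomial.eval_one,
    zero_pow (hS k hk)]
  ring

lemma claimC : ∀ n M : ℕ, n ≤ M →
    (odpoly M * dpoly M).coeff n = if n = 0 then 1 else 0 := by
  intro n
  induction n using Nat.strong_induction_on with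
  | _ n ih =>
    intro M hnM
    rcases Nat.eq_zero_or_pos n with rfl | hn
    · simp only [if_pos rfl]
      rw [Polynomial.coeff_zero_eq_eval_zero, Polynomial.eval_mul, odpoly, dpoly,
        eval_zero_qpoly _ (fun k hk => by simp [Finset.mem_filter, Finset.mem_Icc] at hk; omega),
        eval_zero_qpoly _ (fun k hk => by simp [Finset.mem_Icc] at hk; omega)]
      norm_num
    · rw [if_neg (by omega)]
      have hfactor : odpoly M * dpoly M
          = Polynomial.expand _ 2 (odpoly M * dpoly (M/2)) := by
        rw [dpoly_factor M, map_mul, ← mul_assoc]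
        congr 1
        rw [← sq_eq_expand]
        ring
      rw [hfactor, Polynomial.coeff_expand (by norm_num : (0:ℕ) < 2)]
      split_ifs with h2
      · set E := ((Finset.Icc 1 M).filter (fun k => ¬ 2 ∣ k)).filter (fun k => M/2 < k) with hE
        have hEhigh : ∀ k ∈ E, M/2 < k := by
          intro k hk
          rw [hE, Finset.mem_filter] at hk
          exact hk.2
        have hsplit : (Finset.Icc 1 M).filter (fun k => ¬ 2 ∣ k)
            = ((Finset.Icc 1 (M/2)).filter (fun k => ¬ 2 ∣ k)) ∪ E := by
          ext x
          rw [hE]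
          simp only [Finset.mem_union, Finset.mem_filter, Finset.mem_Icc]
          constructor
          · rintro ⟨⟨h1, h3⟩, h4⟩
            by_cases hc : x ≤ M/2
            · left; exact ⟨⟨h1, hc⟩, h4⟩
            · right; exact ⟨⟨⟨h1, h3⟩, h4⟩, by omega⟩
          · rintro (⟨⟨h1, h3⟩, h4⟩ | ⟨⟨⟨h1, h3⟩, h4⟩, h5⟩)
            · exact ⟨⟨h1, by omega⟩, h4⟩
            · exact ⟨⟨h1, h3⟩, h4⟩
        have hdisj : Disjoint ((Finset.Icc 1 (M/2)).filter (fun k => ¬ 2 ∣ k)) E := by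
          rw [Finset.disjoint_left]
          intro x hx hxE
          rw [Finset.mem_filter, Finset.mem_Icc] at hx
          have := hEhigh x hxE
          omega
        have hod : odpoly M = odpoly (M/2) * qpoly E := by
          rw [odpoly, hsplit, qpoly_union _ _ hdisj, odpoly]
        have heq2 : odpoly M * dpoly (M/2) = (odpoly (M/2) * dpoly (M/2)) * qpoly E := by
          rw [hod]; ring
        rw [heq2, coeff_mul_qpoly_high _ E (M/2) hEhigh (n/2) (by omega)]
        rw [ih (n/2) (by omega) (M/2) (by omega)]
        rw [if_neg (by omega)]
      · rfl

noncomputable def qcard (n : ℕ) : ℕ :=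
  ((Finset.Icc 1 n).powerset.filter (fun S => ∑ i ∈ S, i = n)).card

lemma coeff_dpoly (M n : ℕ) (h : n ≤ M) : (dpoly M).coeff n = ((qcard n : ℕ) : ZMod 2) := by
  rw [dpoly, coeff_qpoly, qcard]
  congr 2
  ext S
  simp only [Finset.mem_filter, Finset.mem_powerset, Finset.subset_iff, Finset.mem_Icc]
  constructor
  · rintro ⟨h1, h2⟩
    refine ⟨fun {x} hx => ?_, h2⟩
    obtain ⟨hx1, _⟩ := h1 hx
    have hle : x ≤ ∑ i ∈ S, i := Finset.single_le_sum (fun i _ => Nat.zero_le i) hx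
    exact ⟨hx1, by omega⟩
  · rintro ⟨h1, h2⟩
    refine ⟨fun {x} hx => ?_, h2⟩
    obtain ⟨hx1, hx2⟩ := h1 hx
    exact ⟨hx1, by omega⟩

lemma coeff_mul_one_like (g h : Polynomial (ZMod 2)) (N : ℕ)
    (hh : ∀ j ≤ N, h.coeff j = if j = 0 then 1 else 0) :
    (g * h).coeff N = g.coeff N := by
  rw [Polynomial.coeff_mul]
  rw [Finset.sum_eq_single (N, 0)]
  · rw [hh 0 (Nat.zero_le _)]
    simp
  · rintro ⟨a, b⟩ hab hne
    rw [Finset.HasAntidiagonal.mem_antidiagonal] at hab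
    have hb : b ≠ 0 := by
      rintro rfl
      exact hne (by simp at hab ⊢; omega)
    rw [hh b (by omega), if_neg hb]
    ring
  · intro hmem
    exfalso
    exact hmem (by simp)

section Key

variable (a N : ℕ)

def predS (a k : ℕ) : Prop := k % (4*a) = a ∨ k % (4*a) = 3*a

instance : DecidablePred (predS a) := fun k => by unfold predS; infer_instance

noncomputable def Aset : Finset ℕ := (Finset.Icc 1 N).filter (fun k => ¬ predS a k)
noncomputable def Sset : Finset ℕ := (Finset.Icc 1 N).filter (fun k => predS a k)

lemma sset_image (ha : 0 < a) :
    Sset a N = ((Finset.Icc 1 (N/a)).filter (fun k => ¬ 2 ∣ k)).image (fun k => a * k) := by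
  ext x
  rw [Sset, Finset.mem_filter]
  simp only [predS, Finset.mem_filter, Finset.mem_image, Finset.mem_Icc]
  constructor
  · rintro ⟨⟨h1, h2⟩, h3 | h3⟩
    · have hd := Nat.div_add_mod x (4*a)
      rw [h3] at hd
      set q := x / (4*a) with hq
      have hxy : a * (4*q+1) = x := by
        rw [show a * (4*q+1) = 4*a*q + a from by ring]
        exact hd
      refine ⟨4*q + 1, ⟨⟨by omega, ?_⟩, by omega⟩, hxy⟩
      rw [Nat.le_div_iff_mul_le ha, show (4*q+1) * a = a * (4*q+1) from by ring, hxy]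
      exact h2
    · have hd := Nat.div_add_mod x (4*a)
      rw [h3] at hd
      set q := x / (4*a) with hq
      have hxy : a * (4*q+3) = x := by
        rw [show a * (4*q+3) = 4*a*q + 3*a from by ring]
        exact hd
      refine ⟨4*q + 3, ⟨⟨by omega, ?_⟩, by omega⟩, hxy⟩
      rw [Nat.le_div_iff_mul_le ha, show (4*q+3) * a = a * (4*q+3) from by ring, hxy]
      exact h2
  · rintro ⟨y, ⟨⟨hy1, hy2⟩, hy3⟩, rfl⟩
    have hy4 : y % 4 = 1 ∨ y % 4 = 3 := by omega
    have hyN : a * y ≤ N := by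
      have h5 := Nat.div_mul_le_self N a
      calc a * y = y * a := by ring
      _ ≤ (N/a) * a := Nat.mul_le_mul_right a hy2
      _ ≤ N := h5
    have hy0 : 1 ≤ a * y := Nat.mul_pos ha (by omega)
    refine ⟨⟨hy0, hyN⟩, ?_⟩
    have hmm : (a * y) % (4 * a) = a * (y % 4) := by
      rw [show 4 * a = a * 4 from by ring]
      exact Nat.mul_mod_mul_left a y 4
    rcases hy4 with h | h
    · left; rw [hmm, h, mul_one]
    · right; rw [hmm, h, mul_comm]

lemma dpoly_split : dpoly N = qpoly (Aset a N) * qpoly (Sset a N) := by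
  rw [dpoly, Aset, Sset, qpoly, qpoly, qpoly,
    ← Finset.prod_filter_mul_prod_filter_not (Finset.Icc 1 N) (fun k => ¬ predS a k)]
  congr 2
  ext x
  simp [not_not]

lemma key (ha : 0 < a) :
    ((((Aset a N).powerset.filter (fun S => ∑ i ∈ S, i = N)).card : ℕ) : ZMod 2)
      = ∑ ij ∈ Finset.HasAntidiagonal.antidiagonal N,
          ((qcard ij.1 : ℕ) : ZMod 2) *
            (if a ∣ ij.2 then ((qcard (ij.2 / a) : ℕ) : ZMod 2) else 0) := by
  have hqs : qpoly (Sset a N) = Polynomial.expand _ a (odpoly (N/a)) := by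
    rw [sset_image a N ha, odpoly, qpoly_image_mul a ha]
  set G := odpoly (N/a) * dpoly (N/a) with hG
  have hcoeffG : ∀ j ≤ N, (Polynomial.expand (ZMod 2) a G).coeff j
      = if j = 0 then 1 else 0 := by
    intro j hj
    rw [Polynomial.coeff_expand ha]
    split_ifs with h1 h2 h2
    · rw [h2, Nat.zero_div, claimC 0 (N/a) (Nat.zero_le _), if_pos rfl]
    · rw [claimC (j/a) (N/a) (Nat.div_le_div_right hj), if_neg (by
        intro hc
        apply h2
        obtain ⟨c, rfl⟩ := h1
        rw [Nat.mul_div_cancel_left c ha] at hc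
        simp [hc])]
    · exfalso; exact h1 (h2 ▸ dvd_zero a)
    · rfl
  have hmain : (qpoly (Aset a N)).coeff N
      = (dpoly N * Polynomial.expand _ a (dpoly (N/a))).coeff N := by
    have h1 : qpoly (Aset a N) * Polynomial.expand _ a G
        = dpoly N * Polynomial.expand _ a (dpoly (N/a)) := by
      rw [hG, map_mul, dpoly_split a N, hqs]
      ring
    rw [← h1, coeff_mul_one_like _ _ N hcoeffG]
  have hA : (qpoly (Aset a N)).coeff N
      = ((((Aset a N).powerset.filter (fun S => ∑ i ∈ S, i = N)).card : ℕ) : ZMod 2) :=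
    coeff_qpoly _ N
  rw [← hA, hmain, Polynomial.coeff_mul]
  apply Finset.sum_congr rfl
  rintro ⟨i, j⟩ hij
  rw [Finset.HasAntidiagonal.mem_antidiagonal] at hij
  congr 1
  · exact coeff_dpoly N i (by omega)
  · rw [Polynomial.coeff_expand ha]
    split_ifs with h1
    · exact coeff_dpoly (N/a) (j/a) (Nat.div_le_div_right (by omega))
    · rfl

end Key

section Arith

lemma descent (p : ℕ) [hp : Fact p.Prime] (a : ℕ)
    (hsq : ¬ IsSquare ((-(a : ℤ) : ℤ) : ZMod p)) :
    ∀ γ u x y : ℕ, ¬ (p ∣ u) → x^2 + a * y^2 = p^(2*γ+1) * u → False := by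
  intro γ
  induction γ using Nat.strong_induction_on with
  | _ γ ih =>
    intro u x y hu heq
    have hp1 : 0 < p := hp.out.pos
    have hdvd : p ∣ x^2 + a * y^2 := by
      rw [heq]
      exact Dvd.dvd.mul_right (dvd_pow_self p (by omega)) u
    have hcast : ((x : ZMod p))^2 + (a : ZMod p) * (y : ZMod p)^2 = 0 := by
      have : ((x^2 + a * y^2 : ℕ) : ZMod p) = 0 :=
        (ZMod.natCast_eq_zero_iff _ p).mpr hdvd
      push_cast at this
      exact this
    have hy : (y : ZMod p) = 0 := by
      by_contra hy0
      apply hsq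
      have hyy : (y : ZMod p) * (y : ZMod p)⁻¹ = 1 := mul_inv_cancel₀ hy0
      have h1 : ((x : ZMod p) * (y : ZMod p)⁻¹)^2 = -(a : ZMod p) := by
        have hx2 : (x : ZMod p)^2 = -((a : ZMod p) * (y : ZMod p)^2) :=
          eq_neg_of_add_eq_zero_left hcast
        calc ((x : ZMod p) * (y : ZMod p)⁻¹)^2
            = (x : ZMod p)^2 * ((y : ZMod p)⁻¹)^2 := by ring
        _ = -((a : ZMod p) * (y : ZMod p)^2) * ((y : ZMod p)⁻¹)^2 := by rw [hx2]
        _ = -((a : ZMod p) * ((y : ZMod p) * (y : ZMod p)⁻¹)^2) := by ring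
        _ = -(a : ZMod p) := by rw [hyy]; ring
      refine ⟨(x : ZMod p) * (y : ZMod p)⁻¹, ?_⟩
      rw [← sq, h1]
      push_cast
      ring
    have hpy : p ∣ y := (ZMod.natCast_eq_zero_iff y p).mp hy
    have hpx2 : p ∣ x^2 := by
      have h2 : p ∣ a * y^2 := by
        obtain ⟨c, rfl⟩ := hpy
        exact ⟨a * (p * c^2), by ring⟩
      have h3 : a * y^2 ≤ x^2 + a * y^2 := by omega
      have h4 : x^2 = (x^2 + a * y^2) - a * y^2 := by omega
      rw [h4]
      exact Nat.dvd_sub hdvd h2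
    have hpx : p ∣ x := hp.out.dvd_of_dvd_pow hpx2
    obtain ⟨x', rfl⟩ := hpx
    obtain ⟨y', rfl⟩ := hpy
    have heq2 : p^2 * (x'^2 + a * y'^2) = p^(2*γ+1) * u := by
      rw [← heq]; ring
    rcases Nat.eq_zero_or_pos γ with rfl | hγ
    · -- p^2 * K = p * u  ⇒  p ∣ u
      apply hu
      simp only [show 2*0+1 = 1 from rfl, pow_one] at heq2
      have h5 : p * (p * (x'^2 + a * y'^2)) = p * u := by
        rw [← heq2]; ring
      have h6 := Nat.eq_of_mul_eq_mul_left hp1 h5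
      exact ⟨_, h6.symm⟩
    · obtain ⟨γ', rfl⟩ : ∃ γ', γ = γ' + 1 := ⟨γ - 1, by omega⟩
      apply ih γ' (by omega) u x' y' hu
      rw [show 2*(γ'+1)+1 = 2 + (2*γ'+1) from by ring, pow_add, mul_assoc] at heq2
      exact Nat.eq_of_mul_eq_mul_left (by positivity) heq2

lemma psq_mod24 (p : ℕ) [hp : Fact p.Prime] (hp5 : 5 ≤ p) : (p * p) % 24 = 1 := by
  have h2 : ¬ 2 ∣ p := by
    intro h
    have := (Nat.prime_dvd_prime_iff_eq Nat.prime_two hp.out).mp h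
    omega
  have h3 : ¬ 3 ∣ p := by
    intro h
    have := (Nat.prime_dvd_prime_iff_eq Nat.prime_three hp.out).mp h
    omega
  have hmod := Nat.mul_mod p p 24
  have hr : p % 24 < 24 := Nat.mod_lt _ (by norm_num)
  have h2' : ¬ 2 ∣ (p % 24) := by omega
  have h3' : ¬ 3 ∣ (p % 24) := by omega
  set r := p % 24 with hrdef
  clear_value r
  interval_cases r <;> omega

lemma pow_mod24 (p : ℕ) [hp : Fact p.Prime] (hp5 : 5 ≤ p) (β : ℕ) :
    p ^ (2*β+2) % 24 = 1 := by
  have h1 : p ^ (2*β+2) = (p*p)^(β+1) := by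
    rw [show 2*β+2 = 2*(β+1) from by ring, pow_mul, pow_two]
  rw [h1]
  have h2 : (p*p) ^ (β+1) % 24 = ((p*p) % 24)^(β+1) % 24 := Nat.pow_mod _ _ _
  rw [h2, psq_mod24 p hp5]
  simp

end Arith

/-- `Q t s n` is the number of partitions of `n` into distinct parts such that
no part is congruent to `s` or `t - s` modulo `t`. -/
noncomputable def Q (t s n : ℕ) : ℕ :=
  Nat.card {p : n.Partition // p.parts.Nodup ∧
    ∀ x ∈ p.parts, x % t ≠ s % t ∧ x % t ≠ (t - s) % t}

lemma Q_eq_card (a N : ℕ) (ha : 0 < a) :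
    Q (4*a) a N = ((Aset a N).powerset.filter (fun S => ∑ i ∈ S, i = N)).card := by
  classical
  have hcond : ∀ x : ℕ,
      (x % (4*a) ≠ a % (4*a) ∧ x % (4*a) ≠ (4*a - a) % (4*a)) ↔ ¬ predS a x := by
    intro x
    unfold predS
    have e1 : a % (4*a) = a := Nat.mod_eq_of_lt (by omega)
    have e2 : (4*a - a) % (4*a) = 3*a := by
      rw [show 4*a - a = 3*a from by omega]
      exact Nat.mod_eq_of_lt (by omega)
    rw [e1, e2]
    tauto
  rw [Q, ← Nat.card_eq_finsetCard]
  apply Nat.card_congr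
  have memF : ∀ S : Finset ℕ,
      (S ∈ (Aset a N).powerset.filter (fun S => ∑ i ∈ S, i = N)) ↔
        (S ⊆ Aset a N ∧ ∑ i ∈ S, i = N) := by
    intro S
    rw [Finset.mem_filter, Finset.mem_powerset]
  refine ⟨fun pt => ⟨pt.1.parts.toFinset, ?_⟩, fun S => ⟨⟨S.1.val, ?_, ?_⟩, ?_, ?_⟩, ?_, ?_⟩
  · -- membership
    obtain ⟨hnodup, hcnd⟩ := pt.2
    rw [memF]
    have hsum : ∑ i ∈ pt.1.parts.toFinset, i = N := by
      have hd : pt.1.parts.dedup = pt.1.parts := Multiset.dedup_eq_self.mpr hnodup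
      rw [show (∑ i ∈ pt.1.parts.toFinset, i) = (pt.1.parts.toFinset).1.sum
        from (Finset.sum_val _).symm]
      rw [Multiset.toFinset_val, hd, pt.1.parts_sum]
    refine ⟨?_, hsum⟩
    intro x hx
    rw [Multiset.mem_toFinset] at hx
    rw [Aset, Finset.mem_filter, Finset.mem_Icc]
    refine ⟨⟨pt.1.parts_pos hx, ?_⟩, (hcond x).mp (hcnd x hx)⟩
    -- x ≤ N
    obtain ⟨rest, hrest⟩ := Multiset.exists_cons_of_mem hx
    have : pt.1.parts.sum = x + rest.sum := by rw [hrest]; simp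
    have h2 := pt.1.parts_sum
    omega
  · -- parts_pos
    intro i hi
    have hi' : i ∈ S.1 := hi
    have := (memF S.1).mp S.2
    have hmem := this.1 hi'
    rw [Aset, Finset.mem_filter, Finset.mem_Icc] at hmem
    omega
  · -- parts_sum
    rw [Finset.sum_val]
    exact ((memF S.1).mp S.2).2
  · -- nodup
    exact S.1.nodup
  · -- condition
    intro x hx
    have hx' : x ∈ S.1 := hx
    have hmem := ((memF S.1).mp S.2).1 hx'
    rw [Aset, Finset.mem_filter] at hmem
    exact (hcond x).mpr hmem.2
  · -- left inverse
    intro pt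
    apply Subtype.ext
    apply Nat.Partition.ext
    show (pt.1.parts.toFinset.val) = pt.1.parts
    rw [Multiset.toFinset_val]
    exact Multiset.dedup_eq_self.mpr pt.2.1
  · -- right inverse
    intro S
    apply Subtype.ext
    show (Finset.mk S.1.val S.1.nodup).1.toFinset = S.1
    exact Multiset.toFinset_eq S.1.nodup ▸ S.1.val_toFinset

lemma qcard_even (n : ℕ) (h : ¬ ∃ x : ℕ, x * x = 24 * n + 1) :
    ((qcard n : ℕ) : ZMod 2) = 0 := by
  rw [ZMod.natCast_eq_zero_iff]
  exact (Frank.franklin n h).two_dvd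

theorem stmt15 (p : ℕ) [Fact p.Prime] (hp : 5 ≤ p) (α : ℕ) (hα : 0 < α)
    (hleg : legendreSym p (-(α : ℤ)) = -1) (j : ℕ) (hj1 : 1 ≤ j) (hj2 : j ≤ p - 1)
    (β n : ℕ) :
    Q (4 * α) α (p ^ (2 * β + 1) * (p * n + j) + (α + 1) * (p ^ (2 * β + 2) - 1) / 24)
      ≡ 0 [MOD 2] := by
  have hpprime : Fact p.Prime := inferInstance
  set N := p ^ (2 * β + 1) * (p * n + j) + (α + 1) * (p ^ (2 * β + 2) - 1) / 24 with hN
  -- arithmetic facts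
  have hP2pos : 1 ≤ p ^ (2*β+2) := Nat.one_le_pow _ _ (by omega)
  have h24 : 24 ∣ p ^ (2*β+2) - 1 := by
    have := pow_mod24 p hp β
    omega
  have hD : 24 * ((α + 1) * (p ^ (2 * β + 2) - 1) / 24) = (α+1) * (p ^ (2*β+2) - 1) :=
    Nat.mul_div_cancel' (Dvd.dvd.mul_left h24 (α+1))
  have hP21 : p ^ (2*β+2) = p ^ (2*β+1) * p := by
    rw [← pow_succ]
  have hNform : 24 * N + α + 1 = p ^ (2*β+1) * (24*(p*n+j) + (α+1)*p) := by
    rw [hN]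
    zify [hP2pos] at hD hP21 ⊢
    linear_combination hD + ((α : ℤ) + 1) * hP21
  have hu : ¬ p ∣ (24*(p*n+j) + (α+1)*p) := by
    intro hdvd
    have h2 : p ∣ 24*(p*n) + (α+1)*p := ⟨24*n + (α+1), by ring⟩
    have h3 : 24*(p*n+j)+(α+1)*p = (24*(p*n) + (α+1)*p) + 24*j := by ring
    rw [h3] at hdvd
    have h1 : p ∣ 24*j := (Nat.dvd_add_right h2).mp hdvd
    rcases (Nat.Prime.dvd_mul hpprime.out).mp h1 with h | h
    · have hle := Nat.le_of_dvd (by norm_num) h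
      interval_cases p <;> omega
    · have := Nat.le_of_dvd (by omega) h
      omega
  have hsq : ¬ IsSquare ((-(α : ℤ) : ℤ) : ZMod p) := (legendreSym.eq_neg_one_iff p).mp hleg
  -- conclude
  rw [Nat.modEq_zero_iff_dvd, Q_eq_card α N hα,
    ← ZMod.natCast_eq_zero_iff, key α N hα]
  apply Finset.sum_eq_zero
  rintro ⟨i, jj⟩ hij
  rw [Finset.HasAntidiagonal.mem_antidiagonal] at hij
  by_cases hdvd : α ∣ jj
  swap
  · rw [if_neg hdvd, mul_zero]
  rw [if_pos hdvd]
  obtain ⟨h', rfl⟩ := hdvd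
  rw [Nat.mul_div_cancel_left h' hα]
  rcases eq_or_ne ((qcard i : ℕ) : ZMod 2) 0 with h0 | h0
  · rw [h0, zero_mul]
  rcases eq_or_ne ((qcard h' : ℕ) : ZMod 2) 0 with h1 | h1
  · rw [h1, mul_zero]
  exfalso
  have hsq1 : ∃ x : ℕ, x * x = 24 * i + 1 := by
    by_contra hc
    exact h0 (qcard_even i hc)
  have hsq2 : ∃ y : ℕ, y * y = 24 * h' + 1 := by
    by_contra hc
    exact h1 (qcard_even h' hc)
  obtain ⟨x, hx⟩ := hsq1
  obtain ⟨y, hy⟩ := hsq2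
  apply descent p α hsq β (24*(p*n+j) + (α+1)*p) x y hu
  rw [← hNform]
  have : x^2 + α * y^2 = (24*i+1) + α * (24*h'+1) := by
    rw [pow_two, pow_two, hx, hy]
  rw [this]
  have hijN : i + α * h' = N := hij
  calc 24*i+1 + α * (24*h'+1) = 24*(i + α*h') + α + 1 := by ring
  _ = 24*N + α + 1 := by rw [hijN]
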